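/- Let k be an algebraically closed field of characteristic 0. The quotient of the free k-algebra on three generators t₁, t₂, t₃ by the two-sided ideal generated by the elements t₁t₂ + t₂t₁, t₁t₃ − t₃t₁, t₂t₃ − t₃t₂, t₁² − 1, t₂² − 1, t₃² − 1 is isomorphic as a k-algebra to M₂(k) × M₂(k), the product of two copies of the algebra of 2×2 matrices over k. -/

import Mathlib

open FreeAlgebra

/-- The quotient of the free `k`-algebra on `Fin m` by the two-sided ideal
generated by the set `rels` of relators, realized as the `RingQuot` of the
relation identifying each relator with `0`. -/
abbrev presentedAlgebra (k : Type) [Field k] (m : ℕ)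
    (rels : Set (FreeAlgebra k (Fin m))) : Type :=
  RingQuot (fun a b : FreeAlgebra k (Fin m) => a ∈ rels ∧ b = 0)

namespace Stmt1Aux

variable (k : Type) [Field k] [CharZero k]

abbrev M2 := Matrix (Fin 2) (Fin 2) k

abbrev P := M2 k × M2 k

abbrev rels : Set (FreeAlgebra k (Fin 3)) :=
  {ι k 0 * ι k 1 + ι k 1 * ι k 0,
   ι k 0 * ι k 2 - ι k 2 * ι k 0,
   ι k 1 * ι k 2 - ι k 2 * ι k 1,
   ι k 0 * ι k 0 - 1,
   ι k 1 * ι k 1 - 1,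
   ι k 2 * ι k 2 - 1}

abbrev A := presentedAlgebra k 3 (rels k)

noncomputable abbrev π : FreeAlgebra k (Fin 3) →ₐ[k] A k :=
  RingQuot.mkAlgHom k _

noncomputable def x : A k := π k (ι k 0)
noncomputable def y : A k := π k (ι k 1)
noncomputable def z : A k := π k (ι k 2)

def σx : M2 k := !![0, 1; 1, 0]
def σz : M2 k := !![1, 0; 0, -1]

def gens : Fin 3 → P k := ![(σx k, σx k), (σz k, σz k), (1, -1)]

noncomputable def f : FreeAlgebra k (Fin 3) →ₐ[k] P k := FreeAlgebra.lift k (gens k)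

lemma f_rel : ∀ ⦃a b : FreeAlgebra k (Fin 3)⦄,
    (a ∈ rels k ∧ b = 0) → f k a = f k b := by
  rintro a b ⟨ha, rfl⟩
  rw [map_zero]
  simp only [rels, Set.mem_insert_iff, Set.mem_singleton_iff] at ha
  rcases ha with rfl | rfl | rfl | rfl | rfl | rfl <;>
    simp only [f, map_add, map_sub, map_mul, map_one, lift_ι_apply, gens,
      Matrix.cons_val_zero, Matrix.cons_val_one, Matrix.head_cons, Prod.mk_mul_mk,
      Prod.mk_add_mk, Prod.mk_sub_mk, Prod.ext_iff, Prod.fst_one, Prod.snd_one,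
      Prod.fst_zero, Prod.snd_zero, σx, σz] <;>
    constructor <;>
    · ext i j
      fin_cases i <;> fin_cases j <;>
        simp [Matrix.mul_fin_two, Matrix.one_fin_two] <;> ring

noncomputable def φ : A k →ₐ[k] P k := RingQuot.liftAlgHom k ⟨f k, f_rel k⟩

lemma φ_π (a : FreeAlgebra k (Fin 3)) : φ k (π k a) = f k a :=
  RingQuot.liftAlgHom_mkAlgHom_apply k (f k) (f_rel k) a

noncomputable def S : Fin 8 → A k :=
  ![1, x k, y k, z k, x k * y k, x k * z k, y k * z k, x k * y k * z k]

lemma hφx : φ k (x k) = (σx k, σx k) := by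
  rw [show x k = π k (ι k 0) from rfl, φ_π]
  simp [f, gens]

lemma hφy : φ k (y k) = (σz k, σz k) := by
  rw [show y k = π k (ι k 1) from rfl, φ_π]
  simp [f, gens]

lemma hφz : φ k (z k) = (1, -1) := by
  rw [show z k = π k (ι k 2) from rfl, φ_π]
  simp [f, gens]

lemma hτ : σx k * σz k = !![0, -1; 1, 0] := by
  ext i j
  fin_cases i <;> fin_cases j <;>
    simp [σx, σz, Matrix.mul_apply, Fin.sum_univ_two]

lemma hφxy : φ k (x k * y k) = (!![0, -1; 1, 0], !![0, -1; 1, 0]) := by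
  rw [map_mul, hφx, hφy, Prod.mk_mul_mk, hτ]

lemma hφxz : φ k (x k * z k) = (σx k, -σx k) := by
  rw [map_mul, hφx, hφz, Prod.mk_mul_mk, mul_one, mul_neg_one]

lemma hφyz : φ k (y k * z k) = (σz k, -σz k) := by
  rw [map_mul, hφy, hφz, Prod.mk_mul_mk, mul_one, mul_neg_one]

lemma hφxyz : φ k (x k * y k * z k) = (!![0, -1; 1, 0], -!![0, -1; 1, 0]) := by
  rw [map_mul, hφxy, hφz, Prod.mk_mul_mk, mul_one, mul_neg_one]

set_option maxHeartbeats 1000000 in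
lemma φ_surj : Function.Surjective (φ k) := by
  rintro ⟨M, N⟩
  refine ⟨((M 0 0 + M 1 1 + N 0 0 + N 1 1)/4) • 1
    + ((M 0 1 + M 1 0 + N 0 1 + N 1 0)/4) • x k
    + ((M 0 0 - M 1 1 + N 0 0 - N 1 1)/4) • y k
    + ((M 0 0 + M 1 1 - N 0 0 - N 1 1)/4) • z k
    + ((M 1 0 - M 0 1 + N 1 0 - N 0 1)/4) • (x k * y k)
    + ((M 0 1 + M 1 0 - N 0 1 - N 1 0)/4) • (x k * z k)
    + ((M 0 0 - M 1 1 - N 0 0 + N 1 1)/4) • (y k * z k)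
    + ((M 1 0 - M 0 1 - N 1 0 + N 0 1)/4) • (x k * y k * z k), ?_⟩
  simp only [map_add, map_smul, map_one, hφx, hφy, hφz, hφxy, hφxz, hφyz, hφxyz]
  refine Prod.ext ?_ ?_ <;>
    simp only [Prod.fst_add, Prod.snd_add, Prod.smul_fst, Prod.smul_snd,
      Prod.fst_one, Prod.snd_one, Prod.smul_mk, Prod.mk_add_mk] <;>
    · ext i j
      fin_cases i <;> fin_cases j <;>
        · simp only [σx, σz, Matrix.one_fin_two, Matrix.add_apply, Matrix.smul_apply,
            Matrix.neg_apply, smul_eq_mul, Matrix.cons_val', Matrix.cons_val_zero,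
            Matrix.cons_val_one, Matrix.head_cons, Matrix.empty_val',
            Matrix.cons_val_fin_one, Matrix.head_fin_const, Fin.isValue]
          field_simp
          simp only [Fin.zero_eta, Fin.mk_one, Matrix.of_apply, Matrix.cons_val', Matrix.cons_val_zero,
            Matrix.cons_val_one, Matrix.head_cons, Matrix.empty_val', Matrix.cons_val_fin_one]
          ring

end Stmt1Aux

open Stmt1Aux in
theorem stmt_1 (k : Type) [Field k] [IsAlgClosed k] [CharZero k] :
    Nonempty (presentedAlgebra k 3
      {ι k 0 * ι k 1 + ι k 1 * ι k 0,
       ι k 0 * ι k 2 - ι k 2 * ι k 0,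
       ι k 1 * ι k 2 - ι k 2 * ι k 1,
       ι k 0 * ι k 0 - 1,
       ι k 1 * ι k 1 - 1,
       ι k 2 * ι k 2 - 1}
      ≃ₐ[k] Matrix (Fin 2) (Fin 2) k × Matrix (Fin 2) (Fin 2) k) := by
  -- relations in the quotient
  have hrel : ∀ r ∈ rels k, π k r = 0 := fun r hr => by
    rw [RingQuot.mkAlgHom_rel k ⟨hr, rfl⟩, map_zero]
  have hx2 : x k * x k = 1 := by
    have := hrel (ι k 0 * ι k 0 - 1) (by simp)
    rw [map_sub, map_mul, map_one, sub_eq_zero] at this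
    exact this
  have hy2 : y k * y k = 1 := by
    have := hrel (ι k 1 * ι k 1 - 1) (by simp)
    rw [map_sub, map_mul, map_one, sub_eq_zero] at this
    exact this
  have hz2 : z k * z k = 1 := by
    have := hrel (ι k 2 * ι k 2 - 1) (by simp)
    rw [map_sub, map_mul, map_one, sub_eq_zero] at this
    exact this
  have hyx : y k * x k = -(x k * y k) := by
    have := hrel (ι k 0 * ι k 1 + ι k 1 * ι k 0) (by simp)
    rw [map_add, map_mul, map_mul] at this
    exact eq_neg_of_add_eq_zero_right this
  have hzx : z k * x k = x k * z k := by
    have := hrel (ι k 0 * ι k 2 - ι k 2 * ι k 0) (by simp)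
    rw [map_sub, map_mul, map_mul, sub_eq_zero] at this
    exact this.symm
  have hzy : z k * y k = y k * z k := by
    have := hrel (ι k 1 * ι k 2 - ι k 2 * ι k 1) (by simp)
    rw [map_sub, map_mul, map_mul, sub_eq_zero] at this
    exact this.symm
  -- the eight monomials span the quotient
  set W : Submodule k (A k) := Submodule.span k (Set.range (S k)) with hW
  have mem : ∀ j : Fin 8, S k j ∈ W := fun j => Submodule.subset_span ⟨j, rfl⟩
  have hmulW : ∀ g : A k, (∀ j : Fin 8, g * S k j ∈ W) → ∀ w ∈ W, g * w ∈ W := by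
    intro g hg w hw
    have hle : W ≤ Submodule.comap (LinearMap.mulLeft k g) W := by
      rw [hW, Submodule.span_le]
      rintro _ ⟨j, rfl⟩
      exact hg j
    exact hle hw
  have S0 : S k 0 = 1 := rfl
  have S1 : S k 1 = x k := rfl
  have S2 : S k 2 = y k := rfl
  have S3 : S k 3 = z k := rfl
  have S4 : S k 4 = x k * y k := rfl
  have S5 : S k 5 = x k * z k := rfl
  have S6 : S k 6 = y k * z k := rfl
  have S7 : S k 7 = x k * y k * z k := rfl
  have hxxw : ∀ w : A k, x k * (x k * w) = w := fun w => by
    rw [← mul_assoc, hx2, one_mul]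
  have hyyw : ∀ w : A k, y k * (y k * w) = w := fun w => by
    rw [← mul_assoc, hy2, one_mul]
  have hyxw : ∀ w : A k, y k * (x k * w) = -(x k * (y k * w)) := fun w => by
    rw [← mul_assoc, hyx]
    exact (neg_mul (x k * y k) w).trans (congrArg Neg.neg (mul_assoc (x k) (y k) w))
  have hzxw : ∀ w : A k, z k * (x k * w) = x k * (z k * w) := fun w => by
    rw [← mul_assoc, hzx, mul_assoc]
  have hzyw : ∀ w : A k, z k * (y k * w) = y k * (z k * w) := fun w => by
    rw [← mul_assoc, hzy, mul_assoc]
  have hxS : ∀ j : Fin 8, x k * S k j ∈ W := by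
    intro j
    fin_cases j
    · show x k * 1 ∈ W
      rw [mul_one]; exact mem 1
    · show x k * x k ∈ W
      rw [hx2]; exact mem 0
    · show x k * y k ∈ W
      exact mem 4
    · show x k * z k ∈ W
      exact mem 5
    · show x k * (x k * y k) ∈ W
      rw [hxxw]; exact mem 2
    · show x k * (x k * z k) ∈ W
      rw [hxxw]; exact mem 3
    · show x k * (y k * z k) ∈ W
      rw [← mul_assoc]; exact mem 7
    · show x k * (x k * y k * z k) ∈ W
      rw [mul_assoc (x k) (y k) (z k), hxxw]; exact mem 6
  have hyS : ∀ j : Fin 8, y k * S k j ∈ W := by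
    intro j
    fin_cases j
    · show y k * 1 ∈ W
      rw [mul_one]; exact mem 2
    · show y k * x k ∈ W
      rw [hyx]; exact W.neg_mem (mem 4)
    · show y k * y k ∈ W
      rw [hy2]; exact mem 0
    · show y k * z k ∈ W
      exact mem 6
    · show y k * (x k * y k) ∈ W
      rw [hyxw, hy2, mul_one]; exact W.neg_mem (mem 1)
    · show y k * (x k * z k) ∈ W
      rw [hyxw, ← mul_assoc]; exact W.neg_mem (mem 7)
    · show y k * (y k * z k) ∈ W
      rw [hyyw]; exact mem 3
    · show y k * (x k * y k * z k) ∈ W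
      rw [mul_assoc (x k) (y k) (z k), hyxw, hyyw]; exact W.neg_mem (mem 5)
  have hzS : ∀ j : Fin 8, z k * S k j ∈ W := by
    intro j
    fin_cases j
    · show z k * 1 ∈ W
      rw [mul_one]; exact mem 3
    · show z k * x k ∈ W
      rw [hzx]; exact mem 5
    · show z k * y k ∈ W
      rw [hzy]; exact mem 6
    · show z k * z k ∈ W
      rw [hz2]; exact mem 0
    · show z k * (x k * y k) ∈ W
      rw [show x k * y k = x k * (y k * 1) by rw [mul_one], hzxw, hzyw, mul_one,
        ← mul_assoc]
      exact mem 7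
    · show z k * (x k * z k) ∈ W
      rw [hzxw, hz2, mul_one]; exact mem 1
    · show z k * (y k * z k) ∈ W
      rw [hzyw, hz2, mul_one]; exact mem 2
    · show z k * (x k * y k * z k) ∈ W
      rw [mul_assoc (x k) (y k) (z k), hzxw, hzyw, hz2, mul_one]; exact mem 4
  have hπW : ∀ b : FreeAlgebra k (Fin 3), ∀ w ∈ W, π k b * w ∈ W := by
    intro b
    induction b using FreeAlgebra.induction with
    | grade0 r =>
      intro w hw
      rw [AlgHom.commutes, ← Algebra.smul_def]
      exact W.smul_mem r hw
    | grade1 i =>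
      fin_cases i
      · exact hmulW (x k) hxS
      · exact hmulW (y k) hyS
      · exact hmulW (z k) hzS
    | mul a b ha hb =>
      intro w hw
      rw [map_mul, mul_assoc]
      exact ha _ (hb w hw)
    | add a b ha hb =>
      intro w hw
      rw [map_add, add_mul]
      exact W.add_mem (ha w hw) (hb w hw)
  have hspan : W = ⊤ := by
    rw [eq_top_iff]
    rintro a -
    obtain ⟨b, rfl⟩ := RingQuot.mkAlgHom_surjective k _ a
    have := hπW b 1 (mem 0)
    rwa [mul_one] at this
  have hspan' : Submodule.span k (Set.range (S k)) = ⊤ := hW.symm.trans hspan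
  have hfinA : Module.Finite k (A k) :=
    ⟨⟨(Set.finite_range (S k)).toFinset, by rwa [Set.Finite.coe_toFinset]⟩⟩
  have h8 : Module.finrank k (A k) ≤ 8 := by
    simpa using finrank_le_of_span_eq_top hspan'
  have hP8 : Module.finrank k (P k) = 8 := by
    simp [Module.finrank_prod, Module.finrank_matrix]
  have hsurj : Function.Surjective (φ k) := φ_surj k
  -- injectivity via dimension count
  have hrange := LinearMap.finrank_range_le (φ k).toLinearMap
  have htop : LinearMap.range (φ k).toLinearMap = ⊤ :=
    LinearMap.range_eq_top.mpr hsurj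
  rw [htop, finrank_top] at hrange
  have hfr : Module.finrank k (A k) = Module.finrank k (P k) :=
    le_antisymm (h8.trans hP8.ge) hrange
  have hinj : Function.Injective (φ k) :=
    (LinearMap.injective_iff_surjective_of_finrank_eq_finrank
      (f := (φ k).toLinearMap) hfr).2 hsurj
  exact ⟨AlgEquiv.ofBijective (φ k) ⟨hinj, hsurj⟩⟩
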